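/- Let R be a PID that is not a field with infinitely many primes. Then the Macías space M(R) = (R∖{0}, τ) is not compact: the open cover {σ_p ∖ {0} : p prime} has no finite subcover. -/

import Mathlib

def sigmaSet {R : Type*} [CommRing R] (r : R) : Set R :=
  {s | Ideal.span {r} ⊔ Ideal.span {s} = ⊤}

/-- A PID that is not a field with infinitely many pairwise non-associated primes
has non-compact Macías space M(R) = R∖{0}. -/
theorem macias_not_compact (R : Type*) [CommRing R] [IsDomain R]
    [IsPrincipalIdealRing R] (hf : ¬ IsField R)
    (f : ℕ → R) (hp : ∀ n, Prime (f n))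
    (hna : ∀ m n, m ≠ n → ¬ Associated (f m) (f n)) :
    letI : TopologicalSpace {x : R // x ≠ 0} :=
      TopologicalSpace.generateFrom
        {S : Set {x : R // x ≠ 0} | ∃ k : R, k ≠ 0 ∧
          S = {x : {r : R // r ≠ 0} | (x : R) ∈ sigmaSet k}}
    ¬ CompactSpace {x : R // x ≠ 0} := by
  classical
  letI : TopologicalSpace {x : R // x ≠ 0} :=
    TopologicalSpace.generateFrom
      {S : Set {x : R // x ≠ 0} | ∃ k : R, k ≠ 0 ∧
        S = {x : {r : R // r ≠ 0} | (x : R) ∈ sigmaSet k}}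
  letI : NormalizationMonoid R := UniqueFactorizationMonoid.normalizationMonoid.toNormalizationMonoid
  intro _hc
  -- membership in sigmaSet k is coprimality
  have hmem : ∀ k s : R, s ∈ sigmaSet k ↔ IsCoprime k s := by
    intro k s
    rw [sigmaSet, Set.mem_setOf_eq, ← Ideal.isCoprime_iff_sup_eq,
      Ideal.isCoprime_span_singleton_iff]
  set U : ℕ → Set {x : R // x ≠ 0} :=
    fun n => {x : {r : R // r ≠ 0} | (x : R) ∈ sigmaSet (f n)} with hU
  have hopen : ∀ n, IsOpen (U n) := by
    intro n
    exact TopologicalSpace.GenerateOpen.basic _ ⟨f n, (hp n).ne_zero, rfl⟩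
  have hcover : (Set.univ : Set {x : R // x ≠ 0}) ⊆ ⋃ n, U n := by
    rintro ⟨x, hx⟩ -
    by_contra hxc
    simp only [Set.mem_iUnion, hU, Set.mem_setOf_eq, hmem, not_exists] at hxc
    -- every f n divides x
    have hdvd : ∀ n, f n ∣ x := fun n => by
      have := hxc n
      rwa [(hp n).coprime_iff_not_dvd, not_not] at this
    -- choose a normalized factor associated to each f n
    have hch : ∀ n, ∃ q ∈ UniqueFactorizationMonoid.normalizedFactors x,
        Associated (f n) q := fun n =>
      UniqueFactorizationMonoid.exists_mem_normalizedFactors_of_dvd hx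
        (hp n).irreducible (hdvd n)
    choose g hg hassoc using hch
    have hginj : Function.Injective g := by
      intro m n hmn
      by_contra hne
      exact hna m n hne ((hassoc m).trans (hmn ▸ (hassoc n).symm))
    have hfin : (↑(UniqueFactorizationMonoid.normalizedFactors x).toFinset :
        Set R).Finite := (UniqueFactorizationMonoid.normalizedFactors x).toFinset.finite_toSet
    exact (Set.infinite_of_injective_forall_mem hginj
      (fun n => Multiset.mem_toFinset.mpr (hg n))) hfin
  obtain ⟨t, ht⟩ := isCompact_univ.elim_finite_subcover U hopen hcover
  -- the product of the chosen primes is not covered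
  have hprod0 : (∏ n ∈ t, f n) ≠ 0 := Finset.prod_ne_zero_iff.mpr fun n _ => (hp n).ne_zero
  have := ht (Set.mem_univ (⟨∏ n ∈ t, f n, hprod0⟩ : {x : R // x ≠ 0}))
  simp only [Set.mem_iUnion, hU, Set.mem_setOf_eq, hmem] at this
  obtain ⟨n, hn, hcop⟩ := this
  exact (hp n).not_unit (hcop.isUnit_of_dvd' dvd_rfl (Finset.dvd_prod_of_mem f hn))
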